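/- Let P, Q, R be integers with gcd(P,Q,R)=1 and R ≥ 1. Let S = gcd(Q,R) and choose integers b0, c0 with b0·Q + c0·R = S. Then the set of integer triples (a,b,c) with a ≥ 1, gcd(a,b,c)=1, and aP = bQ + cR equals the set of triples (nS, nPb0 + mR/S, nPc0 − mQ/S) where n ≥ 1 and m is an integer with gcd(m,n)=1. -/

import Mathlib

/-- For integers `P, Q, R` with `gcd(P,Q,R)=1`, `R ≥ 1`, `S = gcd(Q,R)` and Bézout
coefficients `b₀Q + c₀R = S`, the primitive triples `(a,b,c)` with `a ≥ 1` and
`aP = bQ + cR` are exactly the triples `(nS, nPb₀ + mR/S, nPc₀ - mQ/S)` with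
`n ≥ 1`, `gcd(m,n)=1`. -/
theorem primitive_solutions_aP_eq_bQ_plus_cR
    (P Q R : ℤ) (hPQR : Int.gcd P (Int.gcd Q R) = 1) (hR : 1 ≤ R)
    (S b₀ c₀ : ℤ) (hS : S = Int.gcd Q R) (hBezout : b₀ * Q + c₀ * R = S) :
    {t : ℤ × ℤ × ℤ | 1 ≤ t.1 ∧ Int.gcd t.1 (Int.gcd t.2.1 t.2.2) = 1 ∧
        t.1 * P = t.2.1 * Q + t.2.2 * R} =
      {t : ℤ × ℤ × ℤ | ∃ n m : ℤ, 1 ≤ n ∧ Int.gcd m n = 1 ∧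
        t = (n * S, n * P * b₀ + m * (R / S), n * P * c₀ - m * (Q / S))} := by
  have hS0 : 0 < S := by
    rw [hS]
    exact_mod_cast Int.gcd_pos_of_ne_zero_right Q (by omega)
  have hSne : S ≠ 0 := hS0.ne'
  have hSQ : S ∣ Q := hS ▸ Int.gcd_dvd_left Q R
  have hSR : S ∣ R := hS ▸ Int.gcd_dvd_right Q R
  obtain ⟨q, hQ⟩ := hSQ
  obtain ⟨r, hRr⟩ := hSR
  have hqdiv : Q / S = q := by rw [hQ]; exact Int.mul_ediv_cancel_left _ hSne
  have hrdiv : R / S = r := by rw [hRr]; exact Int.mul_ediv_cancel_left _ hSne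
  have hbez' : b₀ * q + c₀ * r = 1 := by
    apply mul_left_cancel₀ hSne
    linear_combination hBezout - b₀ * hQ - c₀ * hRr
  have hPS1 : Int.gcd P S = 1 := by rw [hS]; exact hPQR
  have hPS : IsCoprime S P := by
    rw [Int.isCoprime_iff_gcd_eq_one, Int.gcd_comm]; exact hPS1
  ext ⟨a, b, c⟩
  simp only [Set.mem_setOf_eq, Prod.mk.injEq]
  constructor
  · rintro ⟨ha1, hgcd, heq⟩
    have hdvd : S ∣ a := by
      apply hPS.dvd_of_dvd_mul_right
      refine ⟨b * q + c * r, ?_⟩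
      linear_combination heq + b * hQ + c * hRr
    obtain ⟨n, hn⟩ := hdvd
    refine ⟨n, c₀ * b - b₀ * c, ?_, ?_, ?_, ?_, ?_⟩
    · nlinarith
    · -- gcd m n = 1
      set m : ℤ := c₀ * b - b₀ * c with hm
      set g : ℕ := Int.gcd m n with hg
      have hgm : (g : ℤ) ∣ m := Int.gcd_dvd_left m n
      have hgn : (g : ℤ) ∣ n := Int.gcd_dvd_right m n
      have hgb : (g : ℤ) ∣ b := by
        have : b = n * P * b₀ + m * r := by
          apply mul_left_cancel₀ hSne
          linear_combination -b₀ * heq - b * hBezout + (P * b₀) * hn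
            + (c₀ * b - b₀ * c) * hRr
        rw [this]
        exact Dvd.dvd.add (Dvd.dvd.mul_right (Dvd.dvd.mul_right hgn P) b₀)
          (hgm.mul_right r)
      have hgc : (g : ℤ) ∣ c := by
        have : c = n * P * c₀ - m * q := by
          apply mul_left_cancel₀ hSne
          linear_combination -c₀ * heq - c * hBezout + (P * c₀) * hn
            - (c₀ * b - b₀ * c) * hQ
        rw [this]
        exact Dvd.dvd.sub (Dvd.dvd.mul_right (Dvd.dvd.mul_right hgn P) c₀)
          (hgm.mul_right q)
      have hga : (g : ℤ) ∣ a := by rw [hn]; exact hgn.mul_left S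
      have h1 : (g : ℤ) ∣ 1 := by
        have h2 := Int.dvd_coe_gcd hga (Int.dvd_coe_gcd hgb hgc)
        rw [hgcd] at h2
        exact_mod_cast h2
      have := Int.eq_one_of_dvd_one (by positivity) h1
      exact_mod_cast this
    · linarith [hn]
    · rw [hrdiv]
      apply mul_left_cancel₀ hSne
      linear_combination -b₀ * heq - b * hBezout + (P * b₀) * hn
        + (c₀ * b - b₀ * c) * hRr
    · rw [hqdiv]
      apply mul_left_cancel₀ hSne
      linear_combination -c₀ * heq - c * hBezout + (P * c₀) * hn
        - (c₀ * b - b₀ * c) * hQ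
  · rintro ⟨n, m, hn1, hmn, ha, hb, hc⟩
    rw [hrdiv] at hb
    rw [hqdiv] at hc
    subst ha hb hc
    refine ⟨by nlinarith, ?_, ?_⟩
    · -- gcd
      set a : ℤ := n * S with hadef
      set b : ℤ := n * P * b₀ + m * r with hbdef
      set c : ℤ := n * P * c₀ - m * q with hcdef
      set g : ℕ := Int.gcd a (Int.gcd b c) with hg
      have hga : (g : ℤ) ∣ a := Int.gcd_dvd_left _ _
      have hgbc : (g : ℤ) ∣ (Int.gcd b c : ℤ) := Int.gcd_dvd_right _ _
      have hgb : (g : ℤ) ∣ b := hgbc.trans (Int.gcd_dvd_left _ _)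
      have hgc : (g : ℤ) ∣ c := hgbc.trans (Int.gcd_dvd_right _ _)
      have hgm : (g : ℤ) ∣ m := by
        have : m = c₀ * b - b₀ * c := by
          rw [hbdef, hcdef]; linear_combination -m * hbez'
        rw [this]
        exact Dvd.dvd.sub (hgb.mul_left c₀) (hgc.mul_left b₀)
      have hgnP : (g : ℤ) ∣ n * P := by
        have : n * P = q * b + r * c := by
          rw [hbdef, hcdef]; linear_combination -(n * P) * hbez'
        rw [this]
        exact Dvd.dvd.add (hgb.mul_left q) (hgc.mul_left r)
      have hgnS : (g : ℤ) ∣ n * S := hga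
      have hco : IsCoprime (g : ℤ) n := by
        have hmn' : IsCoprime m n := Int.isCoprime_iff_gcd_eq_one.mpr hmn
        exact IsCoprime.of_isCoprime_of_dvd_left hmn' hgm
      have hgP : (g : ℤ) ∣ P := by
        rw [mul_comm] at hgnP
        exact hco.dvd_of_dvd_mul_right hgnP
      have hgS : (g : ℤ) ∣ S := by
        rw [mul_comm] at hgnS
        exact hco.dvd_of_dvd_mul_right hgnS
      have h1 : (g : ℤ) ∣ 1 := by
        have := Int.dvd_coe_gcd hgP hgS
        rwa [hPS1] at this
        
      have := Int.eq_one_of_dvd_one (by positivity) h1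
      exact_mod_cast this
    · linear_combination -(n * S * P) * hbez' - (n * P * b₀ + m * r) * hQ
        - (n * P * c₀ - m * q) * hRr
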